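/- Let A₁ be a real n₁×n₂ matrix and A₂ a real n₂×n₁ matrix with n₁ ≤ n₂, both of full rank (rank A₁ = rank A₂ = n₁). Let Z₁, Z₂ be n₁×n₁ real matrices and N₁, N₂ be n₂×n₂ real matrices. Then rank(A₁·A₂ − Z₁·A₁·A₂·Z₂) ≤ rank(A₁ − Z₁·A₁·N₁) + rank(I_{n₂} − N₁·N₂) + rank(A₂ − N₂·A₂·Z₂), where I_{n₂} is the n₂×n₂ identity matrix. In displacement notation: δ^∇_{Z₁,Z₂}{A₁A₂} ≤ δ^∇_{Z₁,N₁}{A₁} + δ^∇_{N₁,N₂}{I_{n₂}} + δ^∇_{N₂,Z₂}{A₂}. -/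
import Mathlib


open Matrix

lemma matrix_rank_add_le {m n : ℕ} (A B : Matrix (Fin m) (Fin n) ℝ) :
    (A + B).rank ≤ A.rank + B.rank := by
  have h : LinearMap.range (A + B).mulVecLin ≤
      LinearMap.range A.mulVecLin ⊔ LinearMap.range B.mulVecLin := by
    rintro x ⟨v, rfl⟩
    rw [Matrix.mulVecLin_add]
    exact Submodule.add_mem_sup ⟨v, rfl⟩ ⟨v, rfl⟩
  calc (A + B).rank ≤ Module.finrank ℝ
        ↥(LinearMap.range A.mulVecLin ⊔ LinearMap.range B.mulVecLin) :=
      Submodule.finrank_mono h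
    _ ≤ A.rank + B.rank :=
      Submodule.finrank_add_le_finrank_add_finrank _ _

lemma matrix_rank_neg {m n : ℕ} (A : Matrix (Fin m) (Fin n) ℝ) :
    (-A).rank = A.rank := by
  have h : (-A).mulVecLin = -A.mulVecLin := by
    ext v
    simp [Matrix.neg_mulVec]
  unfold Matrix.rank
  rw [h, LinearMap.range_neg]

theorem product_nabla_displacement (n₁ n₂ : ℕ) (hn : n₁ ≤ n₂)
    (A₁ : Matrix (Fin n₁) (Fin n₂) ℝ) (A₂ : Matrix (Fin n₂) (Fin n₁) ℝ)
    (hA₁ : A₁.rank = n₁) (hA₂ : A₂.rank = n₁)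
    (Z₁ Z₂ : Matrix (Fin n₁) (Fin n₁) ℝ) (N₁ N₂ : Matrix (Fin n₂) (Fin n₂) ℝ) :
    (A₁ * A₂ - Z₁ * (A₁ * A₂) * Z₂).rank
      ≤ (A₁ - Z₁ * A₁ * N₁).rank + ((1 : Matrix (Fin n₂) (Fin n₂) ℝ) - N₁ * N₂).rank
          + (A₂ - N₂ * A₂ * Z₂).rank := by
  have key : A₁ * A₂ - Z₁ * (A₁ * A₂) * Z₂ =
      ((A₁ - Z₁ * A₁ * N₁) * A₂ + (Z₁ * A₁) * (-(1 - N₁ * N₂)) * (A₂ * Z₂))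
        + (Z₁ * A₁ * N₁) * (A₂ - N₂ * A₂ * Z₂) := by
    simp only [sub_eq_add_neg, Matrix.add_mul, Matrix.mul_add, Matrix.neg_mul, Matrix.mul_neg, neg_add, neg_neg, Matrix.mul_one, Matrix.one_mul, Matrix.mul_assoc]
    abel
  rw [key]
  refine le_trans (matrix_rank_add_le _ _) ?_
  refine le_trans (add_le_add (matrix_rank_add_le _ _) (Matrix.rank_mul_le_right _ _)) ?_
  refine add_le_add (add_le_add (Matrix.rank_mul_le_left _ _) ?_) le_rfl
  calc ((Z₁ * A₁) * (-(1 - N₁ * N₂)) * (A₂ * Z₂)).rank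
      ≤ ((Z₁ * A₁) * (-(1 - N₁ * N₂))).rank := Matrix.rank_mul_le_left _ _
    _ ≤ (-(1 - N₁ * N₂)).rank := Matrix.rank_mul_le_right _ _
    _ = _ := matrix_rank_neg _
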